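/- Let C be an open convex cone in a finite-dimensional normed real vector space V and D a balanced cone of directions in V. If f : C → ℝ is D-convex, then f(x + y) ≤ f^∞(x) + f(y) for all y ∈ C and all x ∈ C ∩ D, where f^∞ is the upper recession function of f. -/

import Mathlib

open Set Metric Filter

/-- D-convexity of a real-valued function on a set `S`. -/
def DConvexOn {V : Type*} [NormedAddCommGroup V] [NormedSpace ℝ V]
    (D S : Set V) (f : V → ℝ) : Prop :=
  ∀ ⦃x y : V⦄, x ∈ S → y ∈ S → x - y ∈ D → segment ℝ x y ⊆ S →
    ConvexOn ℝ (segment ℝ x y) f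

/-- The upper recession function `f^∞(x) = limsup_{t→∞, x'→x, t x'∈C} f(t x')/t`. -/
noncomputable def upperRecession {V : Type*} [NormedAddCommGroup V] [NormedSpace ℝ V]
    (C : Set V) (f : V → ℝ) (x : V) : EReal :=
  Filter.limsup (fun p : ℝ × V => ((f (p.1 • p.2) / p.1 : ℝ) : EReal))
    ((Filter.atTop ×ˢ nhds x) ⊓ Filter.principal {p : ℝ × V | p.1 • p.2 ∈ C})

/-- `f(x + y) ≤ f^∞(x) + f(y)` for `y ∈ C` and `x ∈ C ∩ D`. -/
theorem dconvex_key_bound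
    {V : Type*} [NormedAddCommGroup V] [NormedSpace ℝ V] [FiniteDimensional ℝ V]
    (D : Set V) (hDbal : ∀ (t : ℝ), ∀ x ∈ D, t • x ∈ D)
    (C : Set V) (hCopen : IsOpen C)
    (hCcone : ∀ ⦃s t : ℝ⦄, 0 < s → 0 < t → ∀ ⦃x y : V⦄, x ∈ C → y ∈ C → s • x + t • y ∈ C)
    (f : V → ℝ) (hf : DConvexOn D C f)
    (x y : V) (hy : y ∈ C) (hx : x ∈ C ∩ D) :
    ((f (x + y) : ℝ) : EReal) ≤ upperRecession C f x + ((f y : ℝ) : EReal) := by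
  obtain ⟨hxC, hxD⟩ := hx
  -- C is convex
  have hCconv : Convex ℝ C := by
    intro a ha b hb s t hs ht hst
    rcases eq_or_lt_of_le hs with hs0 | hs0
    · simp only [← hs0, zero_smul, zero_add] at hst ⊢
      simpa [hst] using hb
    rcases eq_or_lt_of_le ht with ht0 | ht0
    · simp only [← ht0, zero_smul, add_zero] at hst ⊢
      simpa [hst] using ha
    exact hCcone hs0 ht0 ha hb
  -- the key convexity inequality for t > 0
  have key : ∀ t : ℝ, 1 ≤ t → f (x + y) - (1 - t⁻¹) * f y ≤ f (t • x + y) / t := by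
    intro t ht1
    have ht : (0:ℝ) < t := lt_of_lt_of_le one_pos ht1
    have haC : t • x + y ∈ C := by
      have := hCcone ht one_pos hxC hy
      simpa using this
    have hd : (t • x + y) - y ∈ D := by
      simpa using hDbal t x hxD
    have hseg : segment ℝ (t • x + y) y ⊆ C := hCconv.segment_subset haC hy
    have hconv := hf haC hy hd hseg
    have hpt : t⁻¹ • (t • x + y) + (1 - t⁻¹) • y = x + y := by
      rw [smul_add, smul_smul, inv_mul_cancel₀ (ne_of_gt ht), one_smul, sub_smul, one_smul]
      abel
    have hb0 : (0:ℝ) ≤ 1 - t⁻¹ := by have : t⁻¹ ≤ (1:ℝ) := inv_le_one_of_one_le₀ ht1; linarith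
    obtain ⟨-, hc2⟩ := hconv
    have h2 := hc2 (left_mem_segment ℝ (t • x + y) y) (right_mem_segment ℝ (t • x + y) y)
      (a := t⁻¹) (b := 1 - t⁻¹) (inv_nonneg.mpr ht.le) hb0 (by ring)
    rw [hpt] at h2
    simp only [smul_eq_mul] at h2
    rw [div_eq_inv_mul]
    linarith
  -- the curve t ↦ (t, x + t⁻¹ • y)
  set F := ((Filter.atTop ×ˢ nhds x) ⊓ Filter.principal {p : ℝ × V | p.1 • p.2 ∈ C}) with hF
  set g : ℝ × V → EReal := fun p => ((f (p.1 • p.2) / p.1 : ℝ) : EReal) with hg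
  set φ : ℝ → ℝ × V := fun t => (t, x + t⁻¹ • y) with hφdef
  have hsm : ∀ t : ℝ, 0 < t → t • (x + t⁻¹ • y) = t • x + y := by
    intro t ht
    rw [smul_add, smul_smul, mul_inv_cancel₀ (ne_of_gt ht), one_smul]
  have hφ : Tendsto φ atTop F := by
    rw [hF]
    refine Filter.tendsto_inf.mpr ⟨?_, ?_⟩
    · refine Filter.Tendsto.prodMk tendsto_id ?_
      have : Tendsto (fun t : ℝ => t⁻¹ • y) atTop (nhds ((0:ℝ) • y)) :=
        (tendsto_inv_atTop_zero).smul_const y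
      simpa using tendsto_const_nhds.add this
    · rw [tendsto_principal]
      filter_upwards [eventually_gt_atTop (0:ℝ)] with t ht
      show t • (x + t⁻¹ • y) ∈ C
      rw [hsm t ht]
      simpa using hCcone ht one_pos hxC hy
  -- lower bound on the limsup
  have hmain : ((f (x + y) - f y : ℝ) : EReal) ≤ upperRecession C f x := by
    have h1 : upperRecession C f x = limsup g F := rfl
    have h2 : limsup (g ∘ φ) atTop ≤ limsup g F := by
      rw [Filter.limsup_comp]
      exact limsup_le_limsup_of_le hφ
    have h3 : liminf (g ∘ φ) atTop ≤ limsup (g ∘ φ) atTop := liminf_le_limsup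
    have h4 : ((f (x + y) - f y : ℝ) : EReal) ≤ liminf (g ∘ φ) atTop := by
      have hlim : Tendsto (fun t : ℝ => ((f (x + y) - (1 - t⁻¹) * f y : ℝ) : EReal)) atTop
          (nhds ((f (x + y) - f y : ℝ) : EReal)) := by
        rw [EReal.tendsto_coe]
        have : Tendsto (fun t : ℝ => (1 - t⁻¹) * f y) atTop (nhds ((1 - 0) * f y)) :=
          (tendsto_const_nhds.sub tendsto_inv_atTop_zero).mul_const (f y)
        simpa using tendsto_const_nhds.sub this
      have heq : liminf (fun t : ℝ => ((f (x + y) - (1 - t⁻¹) * f y : ℝ) : EReal)) atTop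
          = ((f (x + y) - f y : ℝ) : EReal) := hlim.liminf_eq
      rw [← heq]
      refine liminf_le_liminf ?_
      filter_upwards [eventually_ge_atTop (1:ℝ)] with t ht1
      have ht : (0:ℝ) < t := lt_of_lt_of_le one_pos ht1
      have := key t ht1
      simp only [Function.comp, g, φ]
      rw [hsm t ht]
      exact_mod_cast this
    exact le_trans h4 (le_trans h3 h2)
  calc ((f (x + y) : ℝ) : EReal) = ((f (x + y) - f y : ℝ) : EReal) + ((f y : ℝ) : EReal) := by
        rw [← EReal.coe_add]; norm_num
    _ ≤ upperRecession C f x + ((f y : ℝ) : EReal) := add_le_add_left hmain _
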